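/- Let t₁, t₂, t₃, κ > 0 and w₁, w₂ > 0, set w₃ = w₁ + w₂, t_s = t₁ + t₂ + t₃ and u = (t_s/κ)·(w₃/2)^{1/3}. Suppose (z₁, z₂, z₃, y) ∈ ℝ⁴ with y > 0 satisfies the system: t₁(1−z₁²)/(1+z₁²) + t₂(1−z₂²)/(1+z₂²) + t₃(1−z₃²)/(1+z₃²) + κy = 0, t₁z₁/(1+z₁²) + t₂z₂/(1+z₂²) + t₃z₃/(1+z₃²) = 0, −z₁(z₁²+3) + z₃(z₃²+3) = w₁y³, and z₂(z₂²+3) − z₃(z₃²+3) = w₂y³. If for some k ∈ {1,2,3} (indices mod 3) one has t_k − t_{k+1} − t_{k−1} ≥ 0, then t_{k+1} + t_{k−1} ≥ t_s·cosh((1/3)·arcsinh(u³))/√(u⁶ + 1). -/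

import Mathlib

set_option maxHeartbeats 1000000

private lemma cube_mono {a b : ℝ} (h : a ≤ b) : a ^ 3 + 3 * a ≤ b ^ 3 + 3 * b := by
  nlinarith [sq_nonneg (a + b), sq_nonneg (a - b)]

private lemma lt_of_cube {a b : ℝ} (h : a ^ 3 + 3 * a < b ^ 3 + 3 * b) : a < b := by
  by_contra hc
  push_neg at hc
  exact absurd (cube_mono hc) (by linarith)

private lemma rpow_third_cube {a : ℝ} (h : 0 ≤ a) : (a ^ ((1 : ℝ) / 3)) ^ (3 : ℕ) = a := by
  rw [← Real.rpow_natCast (a ^ ((1 : ℝ) / 3)) 3, ← Real.rpow_mul h]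
  norm_num

/-- Geometric force-balance bound: the distinguished cap must have `|z| ≥ ta/(tb+tc)`. -/
private lemma geom (ta tb tc za zb zc β : ℝ) (hta : 0 < ta) (htb : 0 < tb) (htc : 0 < tc)
    (hβ : 0 < β) (hk : tb + tc ≤ ta)
    (h1 : ta * (1 - za ^ 2) / (1 + za ^ 2) + tb * (1 - zb ^ 2) / (1 + zb ^ 2) +
      tc * (1 - zc ^ 2) / (1 + zc ^ 2) + β = 0)
    (h2 : ta * za / (1 + za ^ 2) + tb * zb / (1 + zb ^ 2) + tc * zc / (1 + zc ^ 2) = 0) :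
    ta ^ 2 ≤ (tb + tc) ^ 2 * za ^ 2 := by
  have hPa : (0 : ℝ) < 1 + za ^ 2 := by positivity
  have hPb : (0 : ℝ) < 1 + zb ^ 2 := by positivity
  have hPc : (0 : ℝ) < 1 + zc ^ 2 := by positivity
  set Fa := ta * (1 - za ^ 2) / (1 + za ^ 2) with hFa
  set Fb := tb * (1 - zb ^ 2) / (1 + zb ^ 2) with hFb
  set Fc := tc * (1 - zc ^ 2) / (1 + zc ^ 2) with hFc
  set Ga := ta * za / (1 + za ^ 2) with hGa
  set Gb := tb * zb / (1 + zb ^ 2) with hGb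
  set Gc := tc * zc / (1 + zc ^ 2) with hGc
  have nFa : Fa ^ 2 + 4 * Ga ^ 2 = ta ^ 2 := by
    rw [hFa, hGa, div_pow, div_pow]
    field_simp
    ring
  have nFb : Fb ^ 2 + 4 * Gb ^ 2 = tb ^ 2 := by
    rw [hFb, hGb, div_pow, div_pow]
    field_simp
    ring
  have nFc : Fc ^ 2 + 4 * Gc ^ 2 = tc ^ 2 := by
    rw [hFc, hGc, div_pow, div_pow]
    field_simp
    ring
  have CS : Fb * Fc + 4 * (Gb * Gc) ≤ tb * tc := by
    nlinarith [sq_nonneg (Fb * (2 * Gc) - Fc * (2 * Gb)), mul_pos htb htc,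
      sq_nonneg (Fb * Fc + 4 * (Gb * Gc) - tb * tc), sq_nonneg (Fb * Fc + 4 * (Gb * Gc) + tb * tc)]
  have key1 : (β + Fa) ^ 2 + 4 * Ga ^ 2 ≤ (tb + tc) ^ 2 := by
    have e1 : Fb + Fc = -β - Fa := by linarith
    have e2 : Gb + Gc = -Ga := by linarith
    have expand : (β + Fa) ^ 2 + 4 * Ga ^ 2 = (Fb + Fc) ^ 2 + 4 * (Gb + Gc) ^ 2 := by
      rw [e1, e2]; ring
    rw [expand]
    nlinarith [CS, nFb, nFc]
  have hFaneg : Fa ≤ -β / 2 := by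
    have h2b : 2 * β * Fa ≤ -β ^ 2 := by nlinarith [key1, nFa, sq_nonneg (tb + tc)]
    nlinarith [h2b, hβ]
  have hza : 1 < za ^ 2 := by
    have hnum : ta * (1 - za ^ 2) < 0 := by
      by_contra hc
      push_neg at hc
      have : 0 ≤ Fa := by rw [hFa]; positivity
      nlinarith
    nlinarith
  have hGa2 : 4 * Ga ^ 2 ≤ (tb + tc) ^ 2 := by nlinarith [key1, sq_nonneg (β + Fa)]
  have h4 : 4 * (ta * za) ^ 2 ≤ (tb + tc) ^ 2 * (1 + za ^ 2) ^ 2 := by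
    have h := mul_le_mul_of_nonneg_right hGa2 (by positivity : (0:ℝ) ≤ (1 + za ^ 2) ^ 2)
    have e : 4 * Ga ^ 2 * (1 + za ^ 2) ^ 2 = 4 * (ta * za) ^ 2 := by
      rw [hGa, div_pow]
      field_simp
    linarith [h, e]
  -- from 4 t² z² ≤ T² (1+z²)² ≤ 4 T² z⁴ and z² > 1, conclude
  nlinarith [h4, hza, sq_nonneg (tb + tc), mul_pos (mul_pos htb htc) hta,
    mul_nonneg (sq_nonneg (tb + tc)) (sq_nonneg za),
    mul_nonneg (mul_nonneg (sq_nonneg (tb + tc)) (sq_nonneg za)) (sq_nonneg za)]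

/-- Analytic endgame: from the key cubic inequality on `u³` to the cosh/arsinh bound. -/
private lemma endgame (T ts u : ℝ) (hT : 0 < T) (hts : T ≤ ts) (hu : 0 ≤ u)
    (hkey : (ts / T + 2) * Real.sqrt (ts / T - 1) / 2 ≤ u ^ 3) :
    ts * Real.cosh (1 / 3 * Real.arsinh (u ^ 3)) / Real.sqrt (u ^ 6 + 1) ≤ T := by
  set a := Real.arsinh (u ^ 3) with ha
  have hsa : Real.sinh a = u ^ 3 := Real.sinh_arsinh _
  have ha0 : 0 ≤ a := Real.arsinh_nonneg_iff.mpr (by positivity)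
  set S := Real.sinh (1 / 3 * a) with hSdef
  set C := Real.cosh (1 / 3 * a) with hCdef
  have hS0 : 0 ≤ S := Real.sinh_nonneg_iff.mpr (by linarith)
  have hC2 : C ^ 2 = S ^ 2 + 1 := Real.cosh_sq _
  have hC1 : 1 ≤ C := Real.one_le_cosh _
  have hsplit : a = 1 / 3 * a + 1 / 3 * a + 1 / 3 * a := by ring
  have htriple_s : u ^ 3 = 3 * S + 4 * S ^ 3 := by
    rw [← hsa, hsplit, Real.sinh_add, Real.sinh_add, Real.cosh_add, ← hSdef, ← hCdef]
    linear_combination 3 * S * hC2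
  have htriple_c : Real.cosh a = C * (1 + 4 * S ^ 2) := by
    conv_lhs => rw [hsplit]
    rw [Real.cosh_add, Real.cosh_add, Real.sinh_add, ← hSdef, ← hCdef]
    linear_combination C * hC2
  have hsqrt : Real.sqrt (u ^ 6 + 1) = Real.cosh a := by
    have h6 : u ^ 6 + 1 = Real.cosh a ^ 2 := by
      rw [Real.cosh_sq, hsa]; ring
    rw [h6, Real.sqrt_sq (Real.cosh_pos _).le]
  have hτ : 1 ≤ ts / T := (one_le_div hT).mpr hts
  set r := Real.sqrt (ts / T - 1) with hrdef
  have hr0 : 0 ≤ r := Real.sqrt_nonneg _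
  have hr2 : r ^ 2 = ts / T - 1 := Real.sq_sqrt (by linarith)
  have hk2 : 3 * (r / 2) + 4 * (r / 2) ^ 3 ≤ 3 * S + 4 * S ^ 3 := by
    rw [← htriple_s]
    nlinarith [hkey, hr2]
  have hSr : r / 2 ≤ S := by
    nlinarith [hk2, hS0, hr0, sq_nonneg (S + r / 2), sq_nonneg (S - r / 2)]
  have hts2 : ts ≤ T * (1 + 4 * S ^ 2) := by
    have h1 : r ^ 2 / 4 ≤ S ^ 2 := by nlinarith [hSr, hS0, hr0]
    have h2 : ts / T ≤ 1 + 4 * S ^ 2 := by nlinarith [hr2, h1]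
    rw [div_le_iff₀ hT] at h2
    linarith [h2]
  rw [hsqrt, htriple_c, div_le_iff₀ (by positivity)]
  nlinarith [hts2, hC1, mul_le_mul_of_nonneg_left hts2 (by linarith : (0:ℝ) ≤ C)]

/-- Core case lemma: all three cases of the theorem reduce to this. -/
private lemma main_case (tk T κ w y u z1 z2 zk : ℝ)
    (htk : 0 < tk) (hT : 0 < T) (hκ : 0 < κ) (hy : 0 < y) (hw : 0 < w)
    (hkT : T ≤ tk)
    (hβle : κ * y ≤ tk + T)
    (hzk : tk ^ 2 ≤ T ^ 2 * zk ^ 2)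
    (hz1 : z1 ≤ 0) (hz2 : 0 ≤ z2) (hz1k : z1 ≤ zk) (hzk2 : zk ≤ z2)
    (hvol : z2 ^ 3 + 3 * z2 - (z1 ^ 3 + 3 * z1) = w * y ^ 3)
    (hu : u = (tk + T) / κ * (w / 2) ^ ((1 : ℝ) / 3)) :
    T ≥ (tk + T) * Real.cosh (1 / 3 * Real.arsinh (u ^ 3)) / Real.sqrt (u ^ 6 + 1) := by
  set ts := tk + T with hts
  have hts0 : 0 < ts := by positivity
  set m := tk / T with hm
  have hm1 : 1 ≤ m := (one_le_div hT).mpr hkT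
  have hm0 : 0 < m := by linarith
  -- volume lower bound
  have hD : m ^ 3 + 3 * m ≤ w * y ^ 3 := by
    rcases le_or_gt 0 zk with hzkpos | hzkneg
    · have htkz : tk ≤ T * zk := by
        nlinarith [hzk, mul_nonneg hT.le hzkpos, htk]
      have hmzk : m ≤ zk := by
        rw [hm, div_le_iff₀ hT]
        linarith [htkz]
      have h2 : m ≤ z2 := le_trans hmzk hzk2
      have := cube_mono h2
      have hz1neg : z1 ^ 3 + 3 * z1 ≤ 0 := by nlinarith [hz1, sq_nonneg z1]
      linarith
    · have htkz : tk ≤ T * (-zk) := by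
        nlinarith [hzk, mul_nonneg hT.le (by linarith : (0:ℝ) ≤ -zk), htk]
      have hmzk : m ≤ -zk := by
        rw [hm, div_le_iff₀ hT]
        linarith [htkz]
      have h1 : z1 ≤ -m := by linarith [hz1k]
      have := cube_mono h1
      have hz2pos : 0 ≤ z2 ^ 3 + 3 * z2 := by nlinarith [hz2, sq_nonneg z2]
      nlinarith [this, hz2pos]
  have hu0 : 0 ≤ u := by
    rw [hu]
    have : (0:ℝ) ≤ (w / 2) ^ ((1 : ℝ) / 3) := Real.rpow_nonneg (by linarith) _
    positivity
  have hu3 : u ^ 3 = ts ^ 3 / κ ^ 3 * (w / 2) := by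
    rw [hu, mul_pow, rpow_third_cube (by linarith : (0:ℝ) ≤ w / 2), div_pow]
  -- key inequality for endgame
  have hβpos : 0 < κ * y := by positivity
  have hκy3 : κ ^ 3 * y ^ 3 ≤ ts ^ 3 := by
    have := pow_le_pow_left₀ hβpos.le hβle 3
    calc κ ^ 3 * y ^ 3 = (κ * y) ^ 3 := by ring
      _ ≤ ts ^ 3 := this
  set r := Real.sqrt m with hr
  have hr1 : 1 ≤ r := by
    rw [hr, show (1:ℝ) = Real.sqrt 1 by simp]
    exact Real.sqrt_le_sqrt (by linarith)
  have hr2 : r ^ 2 = m := Real.sq_sqrt hm0.le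
  have step1 : (m + 3) * r ≤ m ^ 3 + 3 * m := by
    have hr0 : (0:ℝ) ≤ r := by linarith
    have hfact : 0 ≤ r * (r - 1) * (r ^ 4 + r ^ 3 + r ^ 2 + 3) := by
      apply mul_nonneg (mul_nonneg hr0 (by linarith))
      positivity
    have h6 : m ^ 3 = r ^ 6 := by rw [← hr2]; ring
    have h1 : (m + 3) * r = (r ^ 2 + 3) * r := by rw [← hr2]
    have h2 : m ^ 3 + 3 * m = r ^ 6 + 3 * r ^ 2 := by rw [h6, ← hr2]
    rw [h1, h2]
    nlinarith [hfact]
  have hprod : κ ^ 3 * ((m + 3) * r) ≤ ts ^ 3 * w := by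
    have hwy : (m + 3) * r ≤ w * y ^ 3 := le_trans step1 hD
    have hA : κ ^ 3 ≤ ts ^ 3 / y ^ 3 := by
      rw [le_div_iff₀ (by positivity)]
      linarith [hκy3]
    have h0 : (0:ℝ) ≤ (m + 3) * r := by positivity
    calc κ ^ 3 * ((m + 3) * r) ≤ (ts ^ 3 / y ^ 3) * (w * y ^ 3) :=
          mul_le_mul hA hwy h0 (by positivity)
      _ = ts ^ 3 * w := by field_simp
  have hkey : (ts / T + 2) * Real.sqrt (ts / T - 1) / 2 ≤ u ^ 3 := by
    have e1 : ts / T - 1 = m := by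
      rw [hts, hm]; field_simp; ring
    have e2 : ts / T + 2 = m + 3 := by
      rw [hts, hm]; field_simp; ring
    rw [e1, e2, ← hr, hu3]
    have erw : ts ^ 3 / κ ^ 3 * (w / 2) = ts ^ 3 * w / (2 * κ ^ 3) := by ring
    rw [erw, div_le_div_iff₀ (by norm_num : (0:ℝ) < 2) (by positivity)]
    nlinarith [hprod]
  exact endgame T ts u hT (by linarith) hu0 hkey


/-- For the reduced critical-point system of a doublet with line tension: if
`t_k − t_{k+1} − t_{k−1} ≥ 0` for some `k`, then
`t_{k+1} + t_{k−1} ≥ t_s·cosh((1/3)arcsinh(u³))/√(u⁶+1)` where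
`u = (t_s/κ)(w₃/2)^{1/3}`. -/
theorem stmt_18 (t₁ t₂ t₃ κ w₁ w₂ : ℝ) (ht₁ : 0 < t₁) (ht₂ : 0 < t₂) (ht₃ : 0 < t₃)
    (hκ : 0 < κ) (hw₁ : 0 < w₁) (hw₂ : 0 < w₂)
    (u : ℝ) (hu : u = (t₁ + t₂ + t₃) / κ * ((w₁ + w₂) / 2) ^ ((1 : ℝ) / 3))
    (z₁ z₂ z₃ y : ℝ) (hy : 0 < y)
    (heq₁ : t₁ * (1 - z₁ ^ 2) / (1 + z₁ ^ 2) + t₂ * (1 - z₂ ^ 2) / (1 + z₂ ^ 2) +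
      t₃ * (1 - z₃ ^ 2) / (1 + z₃ ^ 2) + κ * y = 0)
    (heq₂ : t₁ * z₁ / (1 + z₁ ^ 2) + t₂ * z₂ / (1 + z₂ ^ 2) + t₃ * z₃ / (1 + z₃ ^ 2) = 0)
    (heq₃ : -z₁ * (z₁ ^ 2 + 3) + z₃ * (z₃ ^ 2 + 3) = w₁ * y ^ 3)
    (heq₄ : z₂ * (z₂ ^ 2 + 3) - z₃ * (z₃ ^ 2 + 3) = w₂ * y ^ 3) :
    (t₁ - t₂ - t₃ ≥ 0 →
      t₂ + t₃ ≥ (t₁ + t₂ + t₃) * Real.cosh ((1 / 3) * Real.arsinh (u ^ 3)) /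
        Real.sqrt (u ^ 6 + 1)) ∧
    (t₂ - t₃ - t₁ ≥ 0 →
      t₃ + t₁ ≥ (t₁ + t₂ + t₃) * Real.cosh ((1 / 3) * Real.arsinh (u ^ 3)) /
        Real.sqrt (u ^ 6 + 1)) ∧
    (t₃ - t₁ - t₂ ≥ 0 →
      t₁ + t₂ ≥ (t₁ + t₂ + t₃) * Real.cosh ((1 / 3) * Real.arsinh (u ^ 3)) /
        Real.sqrt (u ^ 6 + 1)) := by
  have hP₁ : (0 : ℝ) < 1 + z₁ ^ 2 := by positivity
  have hP₂ : (0 : ℝ) < 1 + z₂ ^ 2 := by positivity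
  have hP₃ : (0 : ℝ) < 1 + z₃ ^ 2 := by positivity
  have hβpos : 0 < κ * y := by positivity
  have hy3 : 0 < y ^ 3 := by positivity
  -- ordering of the z's
  have hz13 : z₁ < z₃ := by
    apply lt_of_cube
    nlinarith [heq₃, mul_pos hw₁ hy3]
  have hz32 : z₃ < z₂ := by
    apply lt_of_cube
    nlinarith [heq₄, mul_pos hw₂ hy3]
  -- signs of z₁, z₂
  have hz1 : z₁ ≤ 0 := by
    by_contra hc
    push_neg at hc
    have h3 : 0 < z₃ := lt_trans hc hz13
    have h2 : 0 < z₂ := lt_trans h3 hz32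
    have p1 : 0 < t₁ * z₁ / (1 + z₁ ^ 2) := by positivity
    have p2 : 0 < t₂ * z₂ / (1 + z₂ ^ 2) := by positivity
    have p3 : 0 < t₃ * z₃ / (1 + z₃ ^ 2) := by positivity
    linarith [heq₂]
  have hz2 : 0 ≤ z₂ := by
    by_contra hc
    push_neg at hc
    have h3 : z₃ < 0 := lt_trans hz32 hc |>.trans_le le_rfl
    have h1 : z₁ < 0 := lt_trans hz13 h3
    have p1 : t₁ * z₁ / (1 + z₁ ^ 2) < 0 := div_neg_of_neg_of_pos (by nlinarith) hP₁
    have p2 : t₂ * z₂ / (1 + z₂ ^ 2) < 0 := div_neg_of_neg_of_pos (by nlinarith) hP₂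
    have p3 : t₃ * z₃ / (1 + z₃ ^ 2) < 0 := div_neg_of_neg_of_pos (by nlinarith) hP₃
    linarith [heq₂]
  -- κy ≤ t₁+t₂+t₃
  have hb1 : -t₁ ≤ t₁ * (1 - z₁ ^ 2) / (1 + z₁ ^ 2) := by
    rw [le_div_iff₀ hP₁]; nlinarith [ht₁.le, sq_nonneg z₁]
  have hb2 : -t₂ ≤ t₂ * (1 - z₂ ^ 2) / (1 + z₂ ^ 2) := by
    rw [le_div_iff₀ hP₂]; nlinarith [ht₂.le, sq_nonneg z₂]
  have hb3 : -t₃ ≤ t₃ * (1 - z₃ ^ 2) / (1 + z₃ ^ 2) := by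
    rw [le_div_iff₀ hP₃]; nlinarith [ht₃.le, sq_nonneg z₃]
  have hβle : κ * y ≤ t₁ + t₂ + t₃ := by linarith [heq₁]
  -- combined volume equation
  have hvol : z₂ ^ 3 + 3 * z₂ - (z₁ ^ 3 + 3 * z₁) = (w₁ + w₂) * y ^ 3 := by
    linear_combination heq₃ + heq₄
  have hwpos : 0 < w₁ + w₂ := by linarith
  refine ⟨?_, ?_, ?_⟩ <;> intro hk
  · -- k = 1
    have hzk := geom t₁ t₂ t₃ z₁ z₂ z₃ (κ * y) ht₁ ht₂ ht₃ hβpos (by linarith) heq₁ heq₂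
    have h := main_case t₁ (t₂ + t₃) κ (w₁ + w₂) y u z₁ z₂ z₁ ht₁ (by linarith) hκ hy hwpos
      (by linarith) (by linarith) hzk hz1 hz2 le_rfl (by linarith) hvol (by rw [hu]; ring_nf)
    have e : t₁ + (t₂ + t₃) = t₁ + t₂ + t₃ := by ring
    rw [e] at h
    exact h
  · -- k = 2
    have h1 : t₂ * (1 - z₂ ^ 2) / (1 + z₂ ^ 2) + t₃ * (1 - z₃ ^ 2) / (1 + z₃ ^ 2) +
        t₁ * (1 - z₁ ^ 2) / (1 + z₁ ^ 2) + κ * y = 0 := by linarith [heq₁]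
    have h2 : t₂ * z₂ / (1 + z₂ ^ 2) + t₃ * z₃ / (1 + z₃ ^ 2) +
        t₁ * z₁ / (1 + z₁ ^ 2) = 0 := by linarith [heq₂]
    have hzk := geom t₂ t₃ t₁ z₂ z₃ z₁ (κ * y) ht₂ ht₃ ht₁ hβpos (by linarith) h1 h2
    have hzk' : t₂ ^ 2 ≤ (t₃ + t₁) ^ 2 * z₂ ^ 2 := by nlinarith [hzk]
    have h := main_case t₂ (t₃ + t₁) κ (w₁ + w₂) y u z₁ z₂ z₂ ht₂ (by linarith) hκ hy hwpos
      (by linarith) (by linarith) hzk' hz1 hz2 (by linarith) le_rfl hvol (by rw [hu]; ring_nf)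
    have e : t₂ + (t₃ + t₁) = t₁ + t₂ + t₃ := by ring
    rw [e] at h
    exact h
  · -- k = 3
    have h1 : t₃ * (1 - z₃ ^ 2) / (1 + z₃ ^ 2) + t₁ * (1 - z₁ ^ 2) / (1 + z₁ ^ 2) +
        t₂ * (1 - z₂ ^ 2) / (1 + z₂ ^ 2) + κ * y = 0 := by linarith [heq₁]
    have h2 : t₃ * z₃ / (1 + z₃ ^ 2) + t₁ * z₁ / (1 + z₁ ^ 2) +
        t₂ * z₂ / (1 + z₂ ^ 2) = 0 := by linarith [heq₂]
    have hzk := geom t₃ t₁ t₂ z₃ z₁ z₂ (κ * y) ht₃ ht₁ ht₂ hβpos (by linarith) h1 h2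
    have h := main_case t₃ (t₁ + t₂) κ (w₁ + w₂) y u z₁ z₂ z₃ ht₃ (by linarith) hκ hy hwpos
      (by linarith) (by linarith) hzk hz1 hz2 (by linarith) (by linarith) hvol
      (by rw [hu]; ring_nf)
    have e : t₃ + (t₁ + t₂) = t₁ + t₂ + t₃ := by ring
    rw [e] at h
    exact h
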